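/- Let k ≥ 1 and j ≥ 1 be integers and let F : 𝔽₂ʲ → 𝔽₂ be a Boolean function. For n ≥ 1 define A_n = Σ_{l=0}^{n} ( Σ_{m=0}^{j} C_m(F)(-1)^{C(l+m,2k)} ) C(n,l) and B_n = Σ_{l=0}^{n+1} ( Σ_{m=0}^{j} C_m(F)(-1)^{C(l+m,2k+1)} ) C(n+1,l), so that A_n = S(σ_{n+j,2k} + F) and B_n = S(σ_{n+1+j,2k+1} + F) whenever these Boolean functions are defined. Then A_n = B_n for every positive integer n if and only if F is balanced, i.e. S(F) = 0. -/

import Mathlib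

/-- Exponential sum of a Boolean function in `N` variables. -/
def expSum {N : ℕ} (G : (Fin N → ZMod 2) → ZMod 2) : ℤ :=
  ∑ x : Fin N → ZMod 2, (-1 : ℤ) ^ (G x).val

/-- Elementary symmetric Boolean polynomial of degree `k` in `n` variables. -/
def sigma (n k : ℕ) (x : Fin n → ZMod 2) : ZMod 2 :=
  ∑ A ∈ Finset.powersetCard k (Finset.univ : Finset (Fin n)), ∏ i ∈ A, x i

/-- Hamming weight of a Boolean vector. -/
def wt {j : ℕ} (x : Fin j → ZMod 2) : ℕ :=
  (Finset.univ.filter (fun i => x i = 1)).card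

/-- The weight-coefficients `C_m(F) = Σ_{wt(x)=m} (-1)^{F(x)}` of a Boolean function. -/
def coefC {j : ℕ} (F : (Fin j → ZMod 2) → ZMod 2) (m : ℕ) : ℤ :=
  ∑ x ∈ Finset.univ.filter (fun x : Fin j → ZMod 2 => wt x = m), (-1 : ℤ) ^ (F x).val

open Finset

def glueEquiv (j n : ℕ) : ((Fin j → ZMod 2) × (Fin n → ZMod 2)) ≃ (Fin (n + j) → ZMod 2) where
  toFun p := fun i => if h : (i : ℕ) < j then p.1 ⟨i, h⟩ else p.2 ⟨(i : ℕ) - j, by omega⟩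
  invFun x := (fun i => x (Fin.castLE (Nat.le_add_left j n) i),
               fun i => x ⟨j + i, by omega⟩)
  left_inv p := by
    refine Prod.ext (funext fun i => ?_) (funext fun i => ?_)
    · dsimp only
      rw [dif_pos (show ((Fin.castLE (Nat.le_add_left j n) i : Fin (n+j)) : ℕ) < j from i.isLt)]
      exact congrArg p.1 (Fin.ext rfl)
    · dsimp only
      rw [dif_neg (by simp)]
      exact congrArg p.2 (Fin.ext (by simp))
  right_inv x := by
    funext i
    by_cases h : (i : ℕ) < j
    · dsimp only
      rw [dif_pos h]
      exact congrArg x (Fin.ext rfl)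
    · dsimp only
      rw [dif_neg h]
      exact congrArg x (Fin.ext (by simp; omega))

def splitFinEquiv (j n : ℕ) : (Fin j ⊕ Fin n) ≃ Fin (n + j) where
  toFun := Sum.elim (fun i => ⟨i, by omega⟩) (fun i => ⟨j + i, by omega⟩)
  invFun i := if h : (i : ℕ) < j then Sum.inl ⟨i, h⟩ else Sum.inr ⟨(i : ℕ) - j, by omega⟩
  left_inv s := by
    rcases s with i | i
    · simp
    · rw [Sum.elim_inr]
      dsimp only
      rw [dif_neg (by simp)]
      exact congrArg Sum.inr (Fin.ext (by simp))
  right_inv i := by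
    by_cases h : (i : ℕ) < j
    · simp [dif_pos h]
    · dsimp only
      rw [dif_neg h]
      exact Fin.ext (by simp; omega)

lemma glue_fst (j n : ℕ) (p : (Fin j → ZMod 2) × (Fin n → ZMod 2)) (i : Fin j) :
    glueEquiv j n p (Fin.castLE (Nat.le_add_left j n) i) = p.1 i := by
  show dite _ _ _ = _
  rw [dif_pos (show ((Fin.castLE (Nat.le_add_left j n) i : Fin (n+j)) : ℕ) < j from i.isLt)]
  exact congrArg p.1 (Fin.ext rfl)

lemma wt_glue (j n : ℕ) (p : (Fin j → ZMod 2) × (Fin n → ZMod 2)) :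
    wt (glueEquiv j n p) = wt p.1 + wt p.2 := by
  unfold wt
  rw [card_filter, card_filter, card_filter]
  rw [← Equiv.sum_comp (splitFinEquiv j n) (fun i => if glueEquiv j n p i = 1 then 1 else 0)]
  rw [Fintype.sum_sum_type]
  congr 1
  · apply Finset.sum_congr rfl
    intro i _
    have : glueEquiv j n p (splitFinEquiv j n (Sum.inl i)) = p.1 i := by
      show dite _ _ _ = _
      rw [dif_pos (show ((splitFinEquiv j n (Sum.inl i) : Fin (n+j)) : ℕ) < j from i.isLt)]
      exact congrArg p.1 (Fin.ext rfl)
    rw [this]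
  · apply Finset.sum_congr rfl
    intro i _
    have : glueEquiv j n p (splitFinEquiv j n (Sum.inr i)) = p.2 i := by
      show dite _ _ _ = _
      rw [dif_neg (show ¬((splitFinEquiv j n (Sum.inr i) : Fin (n+j)) : ℕ) < j by simp [splitFinEquiv])]
      exact congrArg p.2 (Fin.ext (by simp [splitFinEquiv]))
    rw [this]

lemma zmod2_cases (a : ZMod 2) (h : a ≠ 1) : a = 0 := by revert a; decide

lemma pow_val_add (a b : ZMod 2) :
    (-1:ℤ) ^ ((a + b).val) = (-1:ℤ) ^ a.val * (-1:ℤ) ^ b.val := by revert a b; decide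

lemma pow_val_natCast (c : ℕ) : (-1:ℤ) ^ ((c : ZMod 2)).val = (-1:ℤ) ^ c := by
  rw [ZMod.val_natCast]
  conv_rhs => rw [← Nat.div_add_mod c 2]
  rw [pow_add, pow_mul]
  norm_num

lemma sigma_eq_choose (N d : ℕ) (x : Fin N → ZMod 2) :
    sigma N d x = ((wt x).choose d : ZMod 2) := by
  unfold sigma wt
  rw [← Finset.card_powersetCard]
  have h1 : ∀ A ∈ Finset.powersetCard d (Finset.univ : Finset (Fin N)),
      (∏ i ∈ A, x i) = if A ⊆ Finset.univ.filter (fun i => x i = 1) then (1 : ZMod 2) else 0 := by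
    intro A _
    split_ifs with h
    · apply Finset.prod_eq_one
      intro i hi
      exact (Finset.mem_filter.mp (h hi)).2
    · obtain ⟨i, hi, hxi⟩ : ∃ i ∈ A, x i ≠ 1 := by
        by_contra hc
        push_neg at hc
        exact h fun i hi => Finset.mem_filter.mpr ⟨Finset.mem_univ _, hc i hi⟩
      exact Finset.prod_eq_zero hi (zmod2_cases _ hxi)
  rw [Finset.sum_congr rfl h1, Finset.sum_boole]
  congr 2
  ext A
  simp [Finset.mem_powersetCard, Finset.subset_univ]
  tauto

lemma indicator_filter (n : ℕ) (S : Finset (Fin n)) :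
    Finset.univ.filter (fun i => (if i ∈ S then (1 : ZMod 2) else 0) = 1) = S := by
  ext i
  simp only [Finset.mem_filter, Finset.mem_univ, true_and]
  split_ifs with h
  · simp [h]
  · simp [h]

lemma card_wt_eq (n l : ℕ) :
    (Finset.univ.filter (fun z : Fin n → ZMod 2 => wt z = l)).card = n.choose l := by
  rw [show n.choose l = (Finset.univ : Finset (Fin n)).card.choose l by simp,
    ← Finset.card_powersetCard]
  refine Finset.card_bij' (fun z _ => Finset.univ.filter (fun i => z i = 1))
    (fun S _ => fun i => if i ∈ S then (1 : ZMod 2) else 0) ?_ ?_ ?_ ?_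
  · intro z hz
    rw [Finset.mem_powersetCard]
    exact ⟨Finset.subset_univ _, (Finset.mem_filter.mp hz).2⟩
  · intro S hS
    rw [Finset.mem_filter]
    refine ⟨Finset.mem_univ _, ?_⟩
    show wt _ = l
    unfold wt
    rw [Finset.mem_powersetCard] at hS
    dsimp only
    rw [indicator_filter n S]
    exact hS.2
  · intro z hz
    funext i
    show (if i ∈ Finset.univ.filter (fun i => z i = 1) then (1 : ZMod 2) else 0) = z i
    simp only [Finset.mem_filter, Finset.mem_univ, true_and]
    by_cases h : z i = 1
    · simp [h]
    · simp [h, zmod2_cases _ h]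
  · intro S hS
    exact indicator_filter n S

lemma wt_le {j : ℕ} (x : Fin j → ZMod 2) : wt x ≤ j := by
  unfold wt
  calc (Finset.univ.filter (fun i => x i = 1)).card ≤ (Finset.univ : Finset (Fin j)).card :=
        Finset.card_filter_le _ _
    _ = j := by simp

lemma sum_fiber_wt {N : ℕ} (f : (Fin N → ZMod 2) → ℤ) :
    (∑ x : Fin N → ZMod 2, f x)
      = ∑ m ∈ Finset.range (N + 1),
          ∑ x ∈ Finset.univ.filter (fun x : Fin N → ZMod 2 => wt x = m), f x := by
  rw [Finset.sum_fiberwise_of_maps_to (g := wt) (fun x _ => Finset.mem_range.mpr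
    (Nat.lt_succ_of_le (wt_le x)))]

lemma sum_coefC {j : ℕ} (F : (Fin j → ZMod 2) → ZMod 2) :
    ∑ m ∈ Finset.range (j + 1), coefC F m = expSum F := by
  unfold coefC expSum
  exact (sum_fiber_wt _).symm

lemma expSum_sigma (n j d : ℕ) (F : (Fin j → ZMod 2) → ZMod 2) :
    expSum (fun x : Fin (n + j) → ZMod 2 =>
        sigma (n + j) d x + F (fun i => x (Fin.castLE (Nat.le_add_left j n) i)))
      = ∑ l ∈ Finset.range (n + 1),
          (∑ m ∈ Finset.range (j + 1), coefC F m * (-1 : ℤ) ^ Nat.choose (l + m) d)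
            * (n.choose l : ℤ) := by
  unfold expSum
  rw [← Equiv.sum_comp (glueEquiv j n)
    (fun x => (-1:ℤ) ^ ((sigma (n+j) d x
      + F (fun i => x (Fin.castLE (Nat.le_add_left j n) i))).val))]
  have hterm : ∀ p : (Fin j → ZMod 2) × (Fin n → ZMod 2),
      (-1:ℤ) ^ ((sigma (n+j) d (glueEquiv j n p)
        + F (fun i => glueEquiv j n p (Fin.castLE (Nat.le_add_left j n) i))).val)
      = (-1:ℤ) ^ ((wt p.1 + wt p.2).choose d) * (-1:ℤ) ^ ((F p.1).val) := by
    intro p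
    rw [show (fun i => glueEquiv j n p (Fin.castLE (Nat.le_add_left j n) i)) = p.1 from
      funext (glue_fst j n p)]
    rw [pow_val_add, sigma_eq_choose, wt_glue, pow_val_natCast]
  rw [Finset.sum_congr rfl (fun p _ => hterm p)]
  rw [Fintype.sum_prod_type]
  have hin : ∀ y : Fin j → ZMod 2,
      (∑ z : Fin n → ZMod 2, (-1:ℤ) ^ ((wt y + wt z).choose d) * (-1:ℤ) ^ ((F y).val))
      = ∑ l ∈ Finset.range (n+1),
          ((-1:ℤ) ^ ((wt y + l).choose d) * (-1:ℤ) ^ ((F y).val)) * (n.choose l : ℤ) := by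
    intro y
    rw [sum_fiber_wt (fun z => (-1:ℤ) ^ ((wt y + wt z).choose d) * (-1:ℤ) ^ ((F y).val))]
    apply Finset.sum_congr rfl
    intro l _
    rw [Finset.sum_congr rfl (fun z hz => by
      rw [(Finset.mem_filter.mp hz).2] :
      ∀ z ∈ Finset.univ.filter (fun z : Fin n → ZMod 2 => wt z = l), _ = _)]
    rw [Finset.sum_const, card_wt_eq, nsmul_eq_mul]
    ring
  rw [Finset.sum_congr rfl (fun y _ => hin y)]
  rw [Finset.sum_comm]
  apply Finset.sum_congr rfl
  intro l _
  rw [sum_fiber_wt (fun y => ((-1:ℤ) ^ ((wt y + l).choose d) * (-1:ℤ) ^ ((F y).val))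
      * (n.choose l : ℤ))]
  rw [Finset.sum_mul]
  apply Finset.sum_congr rfl
  intro m _
  unfold coefC
  rw [Finset.sum_congr rfl (fun y hy => by
    rw [(Finset.mem_filter.mp hy).2] :
    ∀ y ∈ Finset.univ.filter (fun y : Fin j → ZMod 2 => wt y = m), _ = _)]
  rw [← Finset.sum_mul, ← Finset.mul_sum, Nat.add_comm m l]
  ring

lemma key_parity (k t : ℕ) :
    (-1:ℤ) ^ (t.choose (2*k+1)) + (-1:ℤ) ^ ((t+1).choose (2*k+1))
      = 1 + (-1:ℤ) ^ (t.choose (2*k)) := by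
  have hp : (t+1).choose (2*k+1) = t.choose (2*k) + t.choose (2*k+1) :=
    Nat.choose_succ_succ t (2*k)
  rcases Nat.even_or_odd (t.choose (2*k+1)) with he | ho
  · rw [he.neg_one_pow, hp, pow_add, he.neg_one_pow]
    ring
  · have ha : Odd (t.choose (2*k)) := by
      have hid := Nat.choose_succ_right_eq t (2*k)
      have hodd : Odd (t.choose (2*k+1) * (2*k+1)) :=
        Nat.odd_mul.mpr ⟨ho, by simp [Nat.odd_iff]⟩
      rw [hid] at hodd
      exact (Nat.odd_mul.mp hodd).1
    rw [ho.neg_one_pow, hp, pow_add, ho.neg_one_pow, ha.neg_one_pow]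
    ring

lemma pascal_sum (n : ℕ) (f : ℕ → ℤ) :
    ∑ l ∈ Finset.range (n + 2), f l * ((n+1).choose l : ℤ)
      = ∑ l ∈ Finset.range (n + 1), (f l + f (l+1)) * (n.choose l : ℤ) := by
  have e1 : ∑ l ∈ Finset.range (n + 2), f l * ((n+1).choose l : ℤ)
      = (∑ l ∈ Finset.range (n + 1), f (l+1) * (((n+1).choose (l+1) : ℕ) : ℤ)) + f 0 := by
    rw [Finset.sum_range_succ' (fun l => f l * ((n+1).choose l : ℤ)) (n+1)]
    simp
  have e2 : ∀ l, (((n+1).choose (l+1) : ℕ) : ℤ) = (n.choose l : ℤ) + (n.choose (l+1) : ℤ) := by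
    intro l
    exact_mod_cast congrArg (Nat.cast (R := ℤ)) (Nat.choose_succ_succ n l)
  have e3 : (∑ l ∈ Finset.range (n + 1), f (l+1) * ((n.choose (l+1) : ℕ) : ℤ)) + f 0
      = ∑ l ∈ Finset.range (n + 1), f l * (n.choose l : ℤ) := by
    rw [Finset.sum_range_succ (fun l => f (l+1) * ((n.choose (l+1) : ℕ) : ℤ)) n,
      Finset.sum_range_succ' (fun l => f l * ((n.choose l : ℕ) : ℤ)) n,
      Nat.choose_succ_self n]
    simp
  calc ∑ l ∈ Finset.range (n + 2), f l * ((n+1).choose l : ℤ)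
      = (∑ l ∈ Finset.range (n + 1), (f (l+1) * (n.choose l : ℤ)
          + f (l+1) * (n.choose (l+1) : ℤ))) + f 0 := by
        rw [e1]
        congr 1
        apply Finset.sum_congr rfl
        intro l _
        rw [e2 l]
        ring
    _ = (∑ l ∈ Finset.range (n + 1), f (l+1) * (n.choose l : ℤ))
          + ((∑ l ∈ Finset.range (n + 1), f (l+1) * (n.choose (l+1) : ℤ)) + f 0) := by
        rw [Finset.sum_add_distrib]
        ring
    _ = (∑ l ∈ Finset.range (n + 1), f (l+1) * (n.choose l : ℤ))
          + ∑ l ∈ Finset.range (n + 1), f l * (n.choose l : ℤ) := by rw [e3]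
    _ = ∑ l ∈ Finset.range (n + 1), (f l + f (l+1)) * (n.choose l : ℤ) := by
        rw [← Finset.sum_add_distrib]
        apply Finset.sum_congr rfl
        intro l _
        ring


/-- With `A_n = Σ_{l=0}^n (Σ_m C_m(F)(-1)^{C(l+m,2k)}) C(n,l)` and
`B_n = Σ_{l=0}^{n+1} (Σ_m C_m(F)(-1)^{C(l+m,2k+1)}) C(n+1,l)`, so that
`A_n = S(σ_{n+j,2k}+F)` and `B_n = S(σ_{n+1+j,2k+1}+F)` whenever these are defined,
one has `A_n = B_n` for every positive `n` if and only if `F` is balanced. -/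
theorem perturbation_shift_iff_balanced
    (k j : ℕ) (hk : 1 ≤ k) (hj : 1 ≤ j)
    (F : (Fin j → ZMod 2) → ZMod 2)
    (A B : ℕ → ℤ)
    (hA : ∀ n : ℕ, A n =
      ∑ l ∈ Finset.range (n + 1),
        (∑ m ∈ Finset.range (j + 1),
          coefC F m * (-1 : ℤ) ^ Nat.choose (l + m) (2 * k)) * (n.choose l : ℤ))
    (hB : ∀ n : ℕ, B n =
      ∑ l ∈ Finset.range (n + 2),
        (∑ m ∈ Finset.range (j + 1),
          coefC F m * (-1 : ℤ) ^ Nat.choose (l + m) (2 * k + 1)) *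
            ((n + 1).choose l : ℤ)) :
    (∀ n : ℕ, 2 * k ≤ n + j →
      A n = expSum (fun x : Fin (n + j) → ZMod 2 =>
          sigma (n + j) (2 * k) x + F (fun i => x (Fin.castLE (Nat.le_add_left j n) i))) ∧
      B n = expSum (fun x : Fin (n + 1 + j) → ZMod 2 =>
          sigma (n + 1 + j) (2 * k + 1) x +
            F (fun i => x (Fin.castLE (Nat.le_add_left j (n + 1)) i)))) ∧
    ((∀ n : ℕ, 1 ≤ n → A n = B n) ↔ expSum F = 0) := by
  have hBA : ∀ n : ℕ, B n = A n + 2^n * (∑ m ∈ Finset.range (j+1), coefC F m) := by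
    intro n
    rw [hB n, hA n, pascal_sum n]
    have hgl : ∀ l : ℕ,
        (∑ m ∈ Finset.range (j + 1),
            coefC F m * (-1:ℤ) ^ Nat.choose (l + m) (2*k+1))
          + (∑ m ∈ Finset.range (j + 1),
              coefC F m * (-1:ℤ) ^ Nat.choose ((l+1) + m) (2*k+1))
        = (∑ m ∈ Finset.range (j+1), coefC F m)
          + ∑ m ∈ Finset.range (j + 1),
              coefC F m * (-1:ℤ) ^ Nat.choose (l + m) (2*k) := by
      intro l
      rw [← Finset.sum_add_distrib, ← Finset.sum_add_distrib]
      apply Finset.sum_congr rfl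
      intro m _
      rw [show (l+1) + m = (l+m) + 1 by omega]
      calc coefC F m * (-1:ℤ) ^ Nat.choose (l + m) (2*k+1)
            + coefC F m * (-1:ℤ) ^ Nat.choose ((l+m)+1) (2*k+1)
          = coefC F m * ((-1:ℤ) ^ Nat.choose (l + m) (2*k+1)
              + (-1:ℤ) ^ Nat.choose ((l+m)+1) (2*k+1)) := by ring
        _ = coefC F m * (1 + (-1:ℤ) ^ Nat.choose (l + m) (2*k)) := by
              rw [key_parity k (l+m)]
        _ = coefC F m + coefC F m * (-1:ℤ) ^ Nat.choose (l + m) (2*k) := by ring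
    rw [Finset.sum_congr rfl (fun l _ => by rw [hgl l])]
    rw [Finset.sum_congr rfl (fun l _ => add_mul _ _ _), Finset.sum_add_distrib,
      ← Finset.mul_sum]
    have hchsum : ∑ l ∈ Finset.range (n+1), ((n.choose l : ℕ) : ℤ) = 2^n := by
      exact_mod_cast congrArg (Nat.cast (R := ℤ)) (Nat.sum_range_choose n)
    rw [hchsum]
    ring
  constructor
  · intro n _
    exact ⟨(hA n).trans (expSum_sigma n j (2*k) F).symm,
      (hB n).trans (expSum_sigma (n+1) j (2*k+1) F).symm⟩
  · constructor
    · intro hAB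
      have h1 := hBA 1
      rw [← hAB 1 (le_refl 1)] at h1
      rw [← sum_coefC F]
      linarith
    · intro hS n _
      have h := hBA n
      rw [sum_coefC F, hS] at h
      rw [h]
      ring
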